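/- Let Q(τ) be as in the linearized bubble model, and write a root as τ = ξ + iη with η ≠ 0. Then separating the imaginary part of Q(ξ+iη) = 0 yields ((4π/(3γ)) + (8(γ-1)/(πγ)) ∑_j π⁴κ̄²j²/((π²κ̄j²+ξ)²+η²))(2ρ_lR_*ξ + 4μ_l/R_*) + (8(γ-1)/(πγ)) ∑_j π²κ̄/((π²κ̄j²+ξ)²+η²) · (ρ_lR_*(ξ²+η²) + 2σ/R_*²) = 0, and consequently 2ρ_lR_*ξ + 4μ_l/R_* < 0, i.e. ξ < -2μ_l/(ρ_lR_*²). -/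

import Mathlib

open Real Complex

/-- The resolvent denominator `Q(τ)` of the linearized bubble dynamics
(simplified form). -/
noncomputable def Qsimp (κ γ Rg Tinf ρl Rs μl σ ρs : ℝ) (τ : ℂ) : ℂ :=
  (1 / ((Rg : ℂ) * (Tinf : ℂ))) *
    ((4 * (π : ℂ) / (3 * (γ : ℂ))) +
      (8 * ((γ : ℂ) - 1) / ((π : ℂ) * (γ : ℂ))) *
        ∑' j : ℕ, (π : ℂ) ^ 2 * (κ : ℂ) / ((π : ℂ) ^ 2 * (κ : ℂ) * ((j : ℂ) + 1) ^ 2 + τ)) *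
    ((ρl : ℂ) * (Rs : ℂ) * τ ^ 2 + (4 * (μl : ℂ) / (Rs : ℂ)) * τ - 2 * (σ : ℂ) / (Rs : ℂ) ^ 2)
  + 4 * (π : ℂ) * (ρs : ℂ) / (Rs : ℂ)

set_option maxHeartbeats 1600000 in
/-- If `τ = ξ + iη` with `η ≠ 0` is a root of `Q`, then the vanishing of the
imaginary part yields the stated real identity, and consequently
`2ρ_lR_*ξ + 4μ_l/R_* < 0`, i.e. `ξ < -2μ_l/(ρ_lR_*²)`. -/
theorem Q_root_imaginary_part
    (κ γ Rg Tinf ρl Rs μl σ ρs : ℝ)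
    (hκ : 0 < κ) (hγ : 1 < γ) (hRg : 0 < Rg) (hT : 0 < Tinf)
    (hρl : 0 < ρl) (hRs : 0 < Rs) (hμl : 0 < μl) (hσ : 0 ≤ σ) (hρs : 0 < ρs)
    (ξ η : ℝ) (hη : η ≠ 0)
    (hroot : Qsimp κ γ Rg Tinf ρl Rs μl σ ρs (Complex.mk ξ η) = 0) :
    ((4 * π / (3 * γ)) +
        (8 * (γ - 1) / (π * γ)) *
          ∑' j : ℕ, π ^ 4 * κ ^ 2 * ((j : ℝ) + 1) ^ 2 /
            ((π ^ 2 * κ * ((j : ℝ) + 1) ^ 2 + ξ) ^ 2 + η ^ 2)) *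
        (2 * ρl * Rs * ξ + 4 * μl / Rs)
      + (8 * (γ - 1) / (π * γ)) *
          (∑' j : ℕ, π ^ 2 * κ /
            ((π ^ 2 * κ * ((j : ℝ) + 1) ^ 2 + ξ) ^ 2 + η ^ 2)) *
          (ρl * Rs * (ξ ^ 2 + η ^ 2) + 2 * σ / Rs ^ 2) = 0
    ∧ 2 * ρl * Rs * ξ + 4 * μl / Rs < 0
    ∧ ξ < -(2 * μl / (ρl * Rs ^ 2)) := by
  have hπ : (0:ℝ) < π := Real.pi_pos
  set τ : ℂ := Complex.mk ξ η with hτ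
  -- real quantities
  set a : ℕ → ℝ := fun j => π ^ 2 * κ * ((j : ℝ) + 1) ^ 2 + ξ with ha
  set D : ℕ → ℝ := fun j => (π ^ 2 * κ * ((j : ℝ) + 1) ^ 2 + ξ) ^ 2 + η ^ 2 with hD
  have hη2 : 0 < η ^ 2 := lt_of_le_of_ne (sq_nonneg η) (Ne.symm (pow_ne_zero 2 hη))
  have hDpos : ∀ j, 0 < D j := by
    intro j
    have h1 : 0 ≤ (π ^ 2 * κ * ((j : ℝ) + 1) ^ 2 + ξ) ^ 2 := sq_nonneg _
    rw [hD]
    dsimp only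
    linarith
  -- the complex summand
  set f : ℕ → ℂ := fun j =>
    (π : ℂ) ^ 2 * (κ : ℂ) / ((π : ℂ) ^ 2 * (κ : ℂ) * ((j : ℂ) + 1) ^ 2 + τ) with hf
  have hnum : (π : ℂ) ^ 2 * (κ : ℂ) = ((π ^ 2 * κ : ℝ) : ℂ) := by push_cast; ring
  have hden : ∀ j : ℕ,
      ((π : ℂ) ^ 2 * (κ : ℂ) * ((j : ℂ) + 1) ^ 2 + τ) = Complex.mk (a j) η := by
    intro j
    rw [show (π : ℂ) ^ 2 * (κ : ℂ) * ((j : ℂ) + 1) ^ 2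
        = ((π ^ 2 * κ * ((j : ℝ) + 1) ^ 2 : ℝ) : ℂ) by push_cast; ring]
    apply Complex.ext
    · show π ^ 2 * κ * ((j : ℝ) + 1) ^ 2 + τ.re = a j
      rw [hτ, ha]
    · show (0 : ℝ) + τ.im = η
      rw [hτ]; simp
  have hDa : ∀ j, D j = a j ^ 2 + η ^ 2 := fun j => rfl
  have hfre : ∀ j, (f j).re = π ^ 2 * κ * a j / D j := by
    intro j
    rw [hf]
    dsimp only
    rw [hden j, hnum, Complex.div_re]
    simp only [Complex.normSq_mk, Complex.ofReal_re, Complex.ofReal_im]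
    rw [hDa j, sq]
    ring
  have hfim : ∀ j, (f j).im = -(π ^ 2 * κ * η) / D j := by
    intro j
    rw [hf]
    dsimp only
    rw [hden j, hnum, Complex.div_im]
    simp only [Complex.normSq_mk, Complex.ofReal_re, Complex.ofReal_im]
    rw [hDa j, sq]
    ring
  -- summability of f
  have hfsum : Summable f := by
    apply Summable.of_norm_bounded_eventually_nat (g := fun j => 2 / ((j : ℝ) + 1) ^ 2)
    · have : Summable (fun j : ℕ => 1 / ((j : ℝ) + 1) ^ 2) := by
        have := Real.summable_one_div_nat_pow.mpr (show 1 < 2 by norm_num)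
        have h2 := (summable_nat_add_iff 1).mpr this
        simpa using h2
      simpa [div_eq_mul_inv, mul_comm] using this.mul_left 2
    · -- eventually bound
      obtain ⟨N, hN⟩ : ∃ N : ℕ, ∀ j ≥ N, -ξ ≤ π ^ 2 * κ * ((j : ℝ) + 1) ^ 2 / 2 := by
        obtain ⟨N, hN⟩ := exists_nat_ge (-ξ * 2 / (π ^ 2 * κ))
        refine ⟨N, fun j hj => ?_⟩
        have h1 : -ξ * 2 / (π ^ 2 * κ) ≤ ((j : ℝ) + 1) ^ 2 := by
          have hjN : (N : ℝ) ≤ (j : ℝ) := by exact_mod_cast hj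
          have h2 : ((j:ℝ)) ≤ ((j:ℝ)+1)^2 := by nlinarith [Nat.cast_nonneg (α := ℝ) j]
          linarith
        have hpk : (0:ℝ) < π ^ 2 * κ := by positivity
        rw [div_le_iff₀ hpk] at h1
        linarith
      filter_upwards [Filter.eventually_atTop.mpr ⟨N, fun j hj => hN j hj⟩] with j hj
      have haj : π ^ 2 * κ * ((j : ℝ) + 1) ^ 2 / 2 ≤ a j := by
        rw [ha]; dsimp only; linarith
      have hapos : 0 < a j := lt_of_lt_of_le (by positivity) haj
      have hnorm : ‖f j‖ ≤ π ^ 2 * κ / a j := by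
        rw [hf]
        dsimp only
        rw [norm_div, hden j]
        have h1 : ‖((π:ℂ)^2 * κ)‖ = π ^ 2 * κ := by
          rw [show ((π:ℂ)^2 * κ) = (((π^2*κ : ℝ)):ℂ) by push_cast; ring,
            Complex.norm_real, Real.norm_eq_abs, abs_of_pos (by positivity)]
        rw [h1]
        apply div_le_div_of_nonneg_left (by positivity) hapos
        calc a j = |(Complex.mk (a j) η).re| := by
              simp [abs_of_pos hapos]
          _ ≤ ‖Complex.mk (a j) η‖ := Complex.abs_re_le_norm _
      calc ‖f j‖ ≤ π ^ 2 * κ / a j := hnorm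
        _ ≤ π ^ 2 * κ / (π ^ 2 * κ * ((j : ℝ) + 1) ^ 2 / 2) :=
            div_le_div_of_nonneg_left (by positivity) (by positivity) haj
        _ = 2 / ((j : ℝ) + 1) ^ 2 := by
            field_simp
  -- real summabilities
  have hBsum : Summable (fun j => π ^ 2 * κ / D j) := by
    have h1 : Summable (fun j => (f j).im) := (Complex.hasSum_im hfsum.hasSum).summable
    have h2 := h1.mul_left (-(1/η))
    apply h2.congr
    intro j
    rw [hfim j]
    field_simp
  have hAsum : Summable (fun j : ℕ => π ^ 4 * κ ^ 2 * ((j : ℝ) + 1) ^ 2 / D j) := by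
    have h1 : Summable (fun j => (f j).re) := (Complex.hasSum_re hfsum.hasSum).summable
    have h2 : Summable (fun j => (f j).re - ξ * (π ^ 2 * κ / D j)) :=
      h1.sub (hBsum.mul_left ξ)
    apply h2.congr
    intro j
    rw [hfre j]
    have := (hDpos j).ne'
    field_simp [ha]
    ring
  -- the sums
  set TA := ∑' j : ℕ, π ^ 4 * κ ^ 2 * ((j : ℝ) + 1) ^ 2 / D j with hTA
  set TB := ∑' j : ℕ, π ^ 2 * κ / D j with hTB
  have hSre : (∑' j, f j).re = TA + ξ * TB := by
    rw [Complex.re_tsum hfsum]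
    rw [hTA, hTB, ← tsum_mul_left, ← Summable.tsum_add hAsum (hBsum.mul_left ξ)]
    congr 1; funext j
    rw [hfre j]
    have := (hDpos j).ne'
    field_simp [ha]
    ring
  have hSim : (∑' j, f j).im = -(η * (π ^ 2 * κ)) * ∑' j, 1 / D j := by
    rw [Complex.im_tsum hfsum, ← tsum_mul_left]
    congr 1; funext j
    rw [hfim j]
    ring
  have hTBalt : TB = π ^ 2 * κ * ∑' j, 1 / D j := by
    rw [hTB, ← tsum_mul_left]
    congr 1; funext j
    ring
  -- rewrite Qsimp
  set S : ℂ := ∑' j, f j with hS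
  have hQ : Qsimp κ γ Rg Tinf ρl Rs μl σ ρs τ =
      ((1 / (Rg * Tinf) : ℝ) : ℂ) *
        ((((4 * π / (3 * γ) : ℝ)) : ℂ) + (((8 * (γ - 1) / (π * γ) : ℝ)) : ℂ) * S) *
        ((((ρl * Rs : ℝ)) : ℂ) * τ ^ 2 + (((4 * μl / Rs : ℝ)) : ℂ) * τ
          - (((2 * σ / Rs ^ 2 : ℝ)) : ℂ))
      + (((4 * π * ρs / Rs : ℝ)) : ℂ) := by
    rw [Qsimp, hS, hf]
    push_cast
    ring
  rw [hQ] at hroot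
  -- take imaginary part
  have him := congrArg Complex.im hroot
  simp only [Complex.add_im, Complex.mul_im, Complex.mul_re, Complex.add_re,
    Complex.ofReal_re, Complex.ofReal_im, Complex.sub_re, Complex.sub_im,
    Complex.zero_im] at him
  have hτre : τ.re = ξ := rfl
  have hτim : τ.im = η := rfl
  have hτ2re : (τ ^ 2).re = ξ ^ 2 - η ^ 2 := by
    rw [sq, Complex.mul_re, hτre, hτim]; ring
  have hτ2im : (τ ^ 2).im = 2 * ξ * η := by
    rw [sq, Complex.mul_im, hτre, hτim]; ring
  simp only [hτre, hτim, hτ2re, hτ2im, hSre, hSim] at him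
  -- constants
  set C0 := 4 * π / (3 * γ) with hC0
  set C1 := 8 * (γ - 1) / (π * γ) with hC1
  have hRT : (0:ℝ) < 1 / (Rg * Tinf) := by positivity
  -- derive the key real identity, after dividing by η and 1/(Rg Tinf)
  have hkey : (C0 + C1 * TA) * (2 * ρl * Rs * ξ + 4 * μl / Rs)
      + C1 * TB * (ρl * Rs * (ξ ^ 2 + η ^ 2) + 2 * σ / Rs ^ 2) = 0 := by
    have hmain : (1 / (Rg * Tinf)) * η *
        ((C0 + C1 * TA) * (2 * ρl * Rs * ξ + 4 * μl / Rs)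
          + C1 * TB * (ρl * Rs * (ξ ^ 2 + η ^ 2) + 2 * σ / Rs ^ 2)) = 0 := by
      rw [hTBalt] at him ⊢
      linear_combination him
    rcases mul_eq_zero.mp hmain with h | h
    · rcases mul_eq_zero.mp h with h' | h'
      · exact absurd h' (ne_of_gt hRT)
      · exact absurd h' hη
    · exact h
  -- positivity facts
  have hC0pos : 0 < C0 := by rw [hC0]; positivity
  have hγ1 : 0 < γ - 1 := by linarith
  have hC1pos : 0 < C1 := by rw [hC1]; positivity
  have hTAnn : 0 ≤ TA := tsum_nonneg fun j => by positivity
  have hTBpos : 0 < TB := by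
    refine Summable.tsum_pos hBsum (fun j => le_of_lt ?_) 0 ?_
    · exact div_pos (by positivity) (hDpos j)
    · exact div_pos (by positivity) (hDpos 0)
  have hPpos : 0 < ρl * Rs * (ξ ^ 2 + η ^ 2) + 2 * σ / Rs ^ 2 := by positivity
  have hK : 0 < C0 + C1 * TA := by positivity
  have hL : 0 < C1 * TB * (ρl * Rs * (ξ ^ 2 + η ^ 2) + 2 * σ / Rs ^ 2) := by positivity
  clear_value TA TB C0 C1 S
  clear hroot him hQ hSre hSim hTBalt hfsum hBsum hfre hfim hden hnum hDa hDpos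
  clear_value τ
  clear hτre hτim hτ2re hτ2im hτ τ hAsum hTA hTB hS hf S f hD ha D a
  have hXneg : 2 * ρl * Rs * ξ + 4 * μl / Rs < 0 := by
    by_contra hcon
    push_neg at hcon
    have h3 : 0 ≤ (C0 + C1 * TA) * (2 * ρl * Rs * ξ + 4 * μl / Rs) :=
      mul_nonneg hK.le hcon
    linarith [hkey, hL, h3]
  refine ⟨hkey, hXneg, ?_⟩
  have h1 : 2 * ρl * Rs ^ 2 * ξ + 4 * μl < 0 := by
    have := mul_pos hRs (neg_pos.mpr hXneg)
    have h2 : 4 * μl / Rs * Rs = 4 * μl := by field_simp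
    nlinarith
  rw [show -(2 * μl / (ρl * Rs ^ 2)) = (-(2 * μl)) / (ρl * Rs ^ 2) by ring,
    lt_div_iff₀ (by positivity)]
  nlinarith [h1]
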